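/- Let g, h : ℝⁿ → [0,∞) be probability densities and suppose T : ℝⁿ → ℝⁿ is a C¹ diffeomorphism with (T)_#(g dx) = h dx, satisfying the change-of-variables equation g(x) = h(T(x)) |det ∇T(x)| and |det ∇T(x)| ≤ 1 for all x. Then for every convex function φ : [0,∞) → ℝ with φ(0) = 0, ∫ φ(g(x)) dx ≤ ∫ φ(h(y)) dy. -/

import Mathlib

open MeasureTheory

/-- Melbourne–Roberto: if `T` is a `C¹` diffeomorphism transporting `g dx` to `h dx`
with `g(x) = h(T x)|det ∇T(x)|` and `|det ∇T| ≤ 1`, then for every convex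
`φ : [0,∞) → ℝ` with `φ(0) = 0` (and the relevant integrability),
`∫ φ(g) ≤ ∫ φ(h)`. -/
theorem stmt18 (n : ℕ)
    (g h : EuclideanSpace ℝ (Fin n) → ℝ)
    (hgmeas : Measurable g) (hhmeas : Measurable h)
    (hgnonneg : ∀ x, 0 ≤ g x) (hhnonneg : ∀ x, 0 ≤ h x)
    (hgprob : ∫ x, g x = 1) (hhprob : ∫ x, h x = 1)
    (T : EuclideanSpace ℝ (Fin n) → EuclideanSpace ℝ (Fin n))
    (hT : ContDiff ℝ 1 T) (hbij : Function.Bijective T)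
    (htransport : Measure.map T (volume.withDensity fun x => ENNReal.ofReal (g x))
      = volume.withDensity fun x => ENNReal.ofReal (h x))
    (hchange : ∀ x, g x = h (T x) * |(fderiv ℝ T x).det|)
    (hdet : ∀ x, |(fderiv ℝ T x).det| ≤ 1) :
    ∀ φ : ℝ → ℝ, ConvexOn ℝ (Set.Ici 0) φ → φ 0 = 0 →
      Integrable (fun x => φ (g x)) volume → Integrable (fun y => φ (h y)) volume →
      ∫ x, φ (g x) ≤ ∫ y, φ (h y) := by
  intro φ hφ hφ0 hIg hIh
  have hderiv : ∀ x ∈ (Set.univ : Set (EuclideanSpace ℝ (Fin n))),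
      HasFDerivWithinAt T (fderiv ℝ T x) Set.univ x :=
    fun x _ => ((hT.differentiable one_ne_zero x).hasFDerivAt).hasFDerivWithinAt
  have hinj : Set.InjOn T Set.univ := hbij.1.injOn
  have himg : T '' Set.univ = Set.univ := by
    rw [Set.image_univ, hbij.2.range_eq]
  -- change of variables
  have hCoV : ∫ y, φ (h y) = ∫ x, |(fderiv ℝ T x).det| • φ (h (T x)) := by
    have := integral_image_eq_integral_abs_det_fderiv_smul volume MeasurableSet.univ
      hderiv hinj (fun y => φ (h y))
    rw [himg] at this
    simpa [setIntegral_univ] using this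
  -- integrability of the RHS integrand
  have hInt : Integrable (fun x => |(fderiv ℝ T x).det| • φ (h (T x))) volume := by
    have := (integrableOn_image_iff_integrableOn_abs_det_fderiv_smul volume
      MeasurableSet.univ hderiv hinj (fun y => φ (h y))).mp ?_
    · simpa [IntegrableOn] using this
    · rw [himg]; simpa [IntegrableOn] using hIh
  rw [hCoV]
  apply integral_mono hIg hInt
  intro x
  have hl0 : 0 ≤ |(fderiv ℝ T x).det| := abs_nonneg _
  have hl1 := hdet x
  have hs : h (T x) ∈ Set.Ici (0:ℝ) := hhnonneg _
  have h0 : (0:ℝ) ∈ Set.Ici (0:ℝ) := Set.self_mem_Ici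
  have := hφ.2 hs h0 hl0 (sub_nonneg.mpr hl1) (by ring)
  simp only [smul_eq_mul, mul_zero, add_zero, hφ0] at this ⊢
  calc φ (g x) = φ (|(fderiv ℝ T x).det| * h (T x)) := by rw [hchange x, mul_comm]
    _ ≤ |(fderiv ℝ T x).det| * φ (h (T x)) := by linarith
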